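/- arXiv:2012.00951 — 6 statements merged into one kernel-verified Lean document; each statement's English description precedes it below -/
import Mathlib

section
/- Let n, m be positive integers, let f̂ : ℝⁿ × ℝᵐ → ℝⁿ and δ : ℝⁿ × ℝᵐ → ℝⁿ be continuous with δ ≥ 0 componentwise, and define 𝕏₊(w) = Icc(f̂(w) − δ(w), f̂(w) + δ(w)) ⊆ ℝⁿ for w ∈ ℝⁿ × ℝᵐ. Then for every closed set K ⊆ ℝⁿ, the set { w ∈ ℝⁿ × ℝᵐ : 𝕏₊(w) ⊆ K } is closed in ℝⁿ × ℝᵐ. -/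
open Set Filter Topology

/-- The set of possible next states: the componentwise box
`Icc (f̂(w) - δ(w)) (f̂(w) + δ(w))`. -/
def nextSet {n m : ℕ} (fhat del : (Fin n → ℝ) × (Fin m → ℝ) → Fin n → ℝ)
    (w : (Fin n → ℝ) × (Fin m → ℝ)) : Set (Fin n → ℝ) :=
  Set.Icc (fhat w - del w) (fhat w + del w)

/-- Projection of a subset of the state-control space onto the state component. -/
def proj {n m : ℕ} (W : Set ((Fin n → ℝ) × (Fin m → ℝ))) : Set (Fin n → ℝ) :=
  Prod.fst '' W

theorem stmt5 {n m : ℕ} (hn : 0 < n) (hm : 0 < m)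
    (fhat del : (Fin n → ℝ) × (Fin m → ℝ) → Fin n → ℝ)
    (hfc : Continuous fhat) (hdc : Continuous del)
    (hd0 : ∀ w, (0 : Fin n → ℝ) ≤ del w)
    (K : Set (Fin n → ℝ)) (hK : IsClosed K) :
    IsClosed {w : (Fin n → ℝ) × (Fin m → ℝ) | nextSet fhat del w ⊆ K} := by
  have hset : {w : (Fin n → ℝ) × (Fin m → ℝ) | nextSet fhat del w ⊆ K}
      = ⋂ t ∈ Set.Icc (-1 : Fin n → ℝ) 1,
          {w | fhat w + t * del w ∈ K} := by
    ext w
    simp only [Set.mem_setOf_eq, Set.mem_iInter]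
    constructor
    · intro hw t ht
      apply hw
      constructor
      · intro i
        have h1 : -1 ≤ t i := ht.1 i
        have h0 : 0 ≤ del w i := hd0 w i
        have : -(del w i) ≤ t i * del w i := by nlinarith
        simp only [Pi.sub_apply, Pi.add_apply, Pi.mul_apply]
        linarith
      · intro i
        have h1 : t i ≤ 1 := ht.2 i
        have h0 : 0 ≤ del w i := hd0 w i
        have : t i * del w i ≤ del w i := by nlinarith
        simp only [Pi.add_apply, Pi.mul_apply]
        linarith
    · intro hw x hx
      set t : Fin n → ℝ := fun i =>
        if del w i = 0 then 0 else (x i - fhat w i) / del w i with ht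
      have hti : ∀ i, -1 ≤ t i ∧ t i ≤ 1 ∧ fhat w i + t i * del w i = x i := by
        intro i
        have hlo : fhat w i - del w i ≤ x i := hx.1 i
        have hhi : x i ≤ fhat w i + del w i := hx.2 i
        have h0 : 0 ≤ del w i := hd0 w i
        by_cases hz : del w i = 0
        · simp only [ht, hz, if_true]
          refine ⟨by norm_num, by norm_num, ?_⟩
          rw [hz] at hlo hhi
          simp only [sub_zero] at hlo
          simp only [add_zero] at hhi
          linarith
        · have hpos : 0 < del w i := lt_of_le_of_ne h0 (Ne.symm hz)
          simp only [ht, hz, if_false]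
          refine ⟨?_, ?_, ?_⟩
          · rw [le_div_iff₀ hpos]; linarith
          · rw [div_le_one hpos]; linarith
          · field_simp; ring
      have htmem : t ∈ Set.Icc (-1 : Fin n → ℝ) 1 :=
        ⟨fun i => (hti i).1, fun i => (hti i).2.1⟩
      have := hw t htmem
      have hx' : fhat w + t * del w = x := by
        funext i
        exact (hti i).2.2
      rwa [hx'] at this
  rw [hset]
  refine isClosed_biInter fun t _ => ?_
  exact hK.preimage (hfc.add (continuous_const.mul hdc))
end

section
/- Let n, m be positive integers, let f̂ : ℝⁿ × ℝᵐ → ℝⁿ and δ : ℝⁿ × ℝᵐ → ℝⁿ be continuous with δ ≥ 0 componentwise, and define 𝕏₊(w) = Icc(f̂(w) − δ(w), f̂(w) + δ(w)) ⊆ ℝⁿ. For 𝕎 ⊆ ℝⁿ × ℝᵐ define the mapping ℐ(𝕎) = { w ∈ 𝕎 : 𝕏₊(w) ⊆ proj(𝕎) }, where proj(𝕎) is the projection of 𝕎 onto the state component. If 𝕎 is compact, then ℐ(𝕎) is compact. -/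
open Set Filter Topology

/-- The mapping `ℐ(𝕎) = { w ∈ 𝕎 : 𝕏₊(w) ⊆ proj 𝕎 }` (Definition 4). -/
def Imap {n m : ℕ} (fhat del : (Fin n → ℝ) × (Fin m → ℝ) → Fin n → ℝ)
    (W : Set ((Fin n → ℝ) × (Fin m → ℝ))) : Set ((Fin n → ℝ) × (Fin m → ℝ)) :=
  {w ∈ W | nextSet fhat del w ⊆ proj W}

theorem stmt6 {n m : ℕ} (hn : 0 < n) (hm : 0 < m)
    (fhat del : (Fin n → ℝ) × (Fin m → ℝ) → Fin n → ℝ)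
    (hfc : Continuous fhat) (hdc : Continuous del)
    (hd0 : ∀ w, (0 : Fin n → ℝ) ≤ del w)
    (W : Set ((Fin n → ℝ) × (Fin m → ℝ))) (hWc : IsCompact W) :
    IsCompact (Imap fhat del W) := by
  have hKc : IsClosed (proj W) := (hWc.image continuous_fst).isClosed
  set g : (Fin n → ℝ) → ((Fin n → ℝ) × (Fin m → ℝ)) → (Fin n → ℝ) :=
    fun t w i => fhat w i + (2 * t i - 1) * del w i with hg
  have hgc : ∀ t, Continuous (g t) := by
    intro t
    refine continuous_pi fun i => ?_
    exact ((continuous_apply i).comp hfc).add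
      (continuous_const.mul ((continuous_apply i).comp hdc))
  have hset : Imap fhat del W =
      W ∩ ⋂ t ∈ Set.Icc (0 : Fin n → ℝ) 1, (g t) ⁻¹' (proj W) := by
    ext w
    simp only [Imap, Set.mem_setOf_eq, Set.mem_inter_iff, Set.mem_iInter,
      Set.mem_preimage]
    constructor
    · rintro ⟨hw, hsub⟩
      refine ⟨hw, fun t ht => hsub ?_⟩
      simp only [nextSet, Set.mem_Icc, Pi.le_def, Pi.sub_apply, Pi.add_apply]
      constructor <;> intro i
      · have h1 : (0:ℝ) ≤ t i := ht.1 i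
        have h2 : (0:ℝ) ≤ del w i := hd0 w i
        have : -(del w i) ≤ (2 * t i - 1) * del w i := by nlinarith
        simp only [hg]; linarith
      · have h1 : t i ≤ 1 := ht.2 i
        have h2 : (0:ℝ) ≤ del w i := hd0 w i
        have : (2 * t i - 1) * del w i ≤ del w i := by nlinarith
        simp only [hg]; linarith
    · rintro ⟨hw, hall⟩
      refine ⟨hw, fun x hx => ?_⟩
      simp only [nextSet, Set.mem_Icc, Pi.le_def, Pi.sub_apply, Pi.add_apply] at hx
      set t : Fin n → ℝ := fun i =>
        if del w i = 0 then 1/2 else (x i - fhat w i) / (2 * del w i) + 1/2 with hT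
      have ht : t ∈ Set.Icc (0 : Fin n → ℝ) 1 := by
        constructor <;> intro i <;> simp only [hT, Pi.zero_apply, Pi.one_apply]
        · split_ifs with h
          · norm_num
          · have hd : 0 < del w i := lt_of_le_of_ne (hd0 w i) (Ne.symm h)
            have h1 := hx.1 i
            have : -(1/2 : ℝ) ≤ (x i - fhat w i) / (2 * del w i) := by
              rw [le_div_iff₀ (by linarith : (0:ℝ) < 2 * del w i)]
              linarith
            linarith
        · split_ifs with h
          · norm_num
          · have hd : 0 < del w i := lt_of_le_of_ne (hd0 w i) (Ne.symm h)
            have h2 := hx.2 i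
            have : (x i - fhat w i) / (2 * del w i) ≤ 1/2 := by
              rw [div_le_iff₀ (by linarith)]
              linarith
            linarith
      have := hall t ht
      have hgx : g t w = x := by
        funext i
        simp only [hg, hT]
        split_ifs with h
        · have h1 := hx.1 i
          have h2 := hx.2 i
          rw [h] at h1 h2 ⊢
          ring_nf
          linarith
        · have hd : 0 < del w i := lt_of_le_of_ne (hd0 w i) (Ne.symm h)
          field_simp
          ring
      rwa [hgx] at this
  rw [hset]
  exact hWc.inter_right (isClosed_biInter fun t _ => hKc.preimage (hgc t))
end

section
/- Let n, m be positive integers, let f̂ : ℝⁿ × ℝᵐ → ℝⁿ and δ : ℝⁿ × ℝᵐ → ℝⁿ be continuous with δ ≥ 0 componentwise, and define 𝕏₊(w) = Icc(f̂(w) − δ(w), f̂(w) + δ(w)) ⊆ ℝⁿ. For 𝕎 ⊆ ℝⁿ × ℝᵐ define ℐ(𝕎) = { w ∈ 𝕎 : 𝕏₊(w) ⊆ proj(𝕎) } and ℐ^∞(𝕎) = ⋂_{i ≥ 1} ℐ^i(𝕎), where ℐ^i denotes the i-fold iterate of ℐ. If 𝕎 is compact, then ℐ^∞(𝕎) is compact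 and robust invariant for the plant set, i.e. for every w ∈ ℐ^∞(𝕎), 𝕏₊(w) ⊆ proj(ℐ^∞(𝕎)). -/
open Set Filter Topology

def Iinf {n m : ℕ} (fhat del : (Fin n → ℝ) × (Fin m → ℝ) → Fin n → ℝ)
    (W : Set ((Fin n → ℝ) × (Fin m → ℝ))) : Set ((Fin n → ℝ) × (Fin m → ℝ)) :=
  ⋂ i : ℕ, (Imap fhat del)^[i + 1] W

section aux
variable {n m : ℕ} {fhat del : (Fin n → ℝ) × (Fin m → ℝ) → Fin n → ℝ}

lemma preClosed (hfc : Continuous fhat) (hdc : Continuous del)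
    (hd0 : ∀ w, (0 : Fin n → ℝ) ≤ del w)
    {K : Set (Fin n → ℝ)} (hK : IsClosed K) :
    IsClosed {w | nextSet fhat del w ⊆ K} := by
  apply IsSeqClosed.isClosed
  intro ws w hmem hlim x hx
  set g : ((Fin n → ℝ) × (Fin m → ℝ)) → Fin n → ℝ :=
    fun v j => max (fhat v j - del v j) (min (x j) (fhat v j + del v j)) with hg
  have hgc : Continuous g := by
    apply continuous_pi; intro j
    have hf : Continuous fun v => fhat v j := (continuous_apply j).comp hfc
    have hd : Continuous fun v => del v j := (continuous_apply j).comp hdc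
    exact (hf.sub hd).max (continuous_const.min (hf.add hd))
  have hgw : g w = x := by
    funext j
    have h1 : fhat w j - del w j ≤ x j := by
      have := hx.1 j; simpa using this
    have h2 : x j ≤ fhat w j + del w j := by
      have := hx.2 j; simpa using this
    simp [hg, min_eq_left h2, max_eq_right h1]
  have hmemK : ∀ k, g (ws k) ∈ K := by
    intro k
    apply hmem k
    constructor
    · intro j
      simp only [hg, Pi.sub_apply]
      exact le_max_left _ _
    · intro j
      simp only [hg, Pi.add_apply]
      apply max_le
      · have := hd0 (ws k) j
        simp only [Pi.zero_apply] at this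
        linarith
      · exact le_trans (min_le_right _ _) le_rfl
  have htend : Tendsto (fun k => g (ws k)) atTop (𝓝 x) := by
    rw [← hgw]
    exact (hgc.tendsto w).comp hlim
  exact hK.mem_of_tendsto htend (Eventually.of_forall hmemK)

lemma Imap_compact (hfc : Continuous fhat) (hdc : Continuous del)
    (hd0 : ∀ w, (0 : Fin n → ℝ) ≤ del w)
    {W : Set ((Fin n → ℝ) × (Fin m → ℝ))} (hW : IsCompact W) :
    IsCompact (Imap fhat del W) := by
  have hproj : IsCompact (proj W) := hW.image continuous_fst
  have : Imap fhat del W = W ∩ {w | nextSet fhat del w ⊆ proj W} := rfl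
  rw [this]
  exact hW.inter_right (preClosed hfc hdc hd0 hproj.isClosed)

lemma Imap_mono : Monotone (Imap fhat del) := by
  intro A B hAB w hw
  exact ⟨hAB hw.1, hw.2.trans (image_mono hAB)⟩

lemma iter_compact (hfc : Continuous fhat) (hdc : Continuous del)
    (hd0 : ∀ w, (0 : Fin n → ℝ) ≤ del w)
    {W : Set ((Fin n → ℝ) × (Fin m → ℝ))} (hW : IsCompact W) (i : ℕ) :
    IsCompact ((Imap fhat del)^[i] W) := by
  induction i with
  | zero => simpa using hW
  | succ k ih =>
    rw [Function.iterate_succ_apply']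
    exact Imap_compact hfc hdc hd0 ih

lemma iter_antitone {W : Set ((Fin n → ℝ) × (Fin m → ℝ))} (i : ℕ) :
    (Imap fhat del)^[i + 1] W ⊆ (Imap fhat del)^[i] W := by
  induction i with
  | zero => exact (fun w hw => hw.1 : Imap fhat del W ⊆ W)
  | succ k ih =>
    have h := Imap_mono (fhat := fhat) (del := del) ih
    simpa only [← Function.iterate_succ_apply'] using h

end aux

theorem stmt8 {n m : ℕ} (hn : 0 < n) (hm : 0 < m)
    (fhat del : (Fin n → ℝ) × (Fin m → ℝ) → Fin n → ℝ)
    (hfc : Continuous fhat) (hdc : Continuous del)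
    (hd0 : ∀ w, (0 : Fin n → ℝ) ≤ del w)
    (W : Set ((Fin n → ℝ) × (Fin m → ℝ))) (hWc : IsCompact W) :
    IsCompact (Iinf fhat del W) ∧
      ∀ w ∈ Iinf fhat del W,
        nextSet fhat del w ⊆ proj (Iinf fhat del W) := by
  have hWi : ∀ i, IsCompact ((Imap fhat del)^[i] W) := iter_compact hfc hdc hd0 hWc
  constructor
  · apply (hWi 1).of_isClosed_subset
    · exact isClosed_iInter fun i => (hWi (i + 1)).isClosed
    · exact iInter_subset _ 0
  · intro w hw x hx
    -- S i : fibers over x of the (i+1)-st iterate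
    set S : ℕ → Set (Fin m → ℝ) :=
      fun i => {u | (x, u) ∈ (Imap fhat del)^[i + 1] W} with hS
    have hw' : ∀ i, w ∈ (Imap fhat del)^[i + 1] W := by
      intro i
      exact mem_iInter.mp hw i
    have hSne : ∀ i, (S i).Nonempty := by
      intro i
      have h2 : w ∈ (Imap fhat del)^[i + 2] W := hw' (i + 1)
      rw [Function.iterate_succ_apply'] at h2
      obtain ⟨v, hv, hvx⟩ := h2.2 hx
      exact ⟨v.2, by rw [hS]; simp only [mem_setOf_eq]; rw [show (x, v.2) = v from Prod.ext hvx.symm rfl]; exact hv⟩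
    have hSclosed : ∀ i, IsClosed (S i) := by
      intro i
      have : S i = (fun u => (x, u)) ⁻¹' ((Imap fhat del)^[i + 1] W) := rfl
      rw [this]
      exact (hWi (i + 1)).isClosed.preimage (Continuous.prodMk_right x)
    have hSanti : ∀ i, S (i + 1) ⊆ S i := fun i u hu => iter_antitone (i + 1) hu
    have hS0c : IsCompact (S 0) := by
      apply ((hWi 1).image continuous_snd).of_isClosed_subset (hSclosed 0)
      intro u hu
      exact ⟨(x, u), hu, rfl⟩
    obtain ⟨u, hu⟩ := IsCompact.nonempty_iInter_of_sequence_nonempty_isCompact_isClosed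
      S hSanti hSne hS0c hSclosed
    refine ⟨(x, u), ?_, rfl⟩
    exact mem_iInter.mpr fun i => mem_iInter.mp hu i
end

section
/- Let n, m be positive integers, let f̂ : ℝⁿ × ℝᵐ → ℝⁿ and δ : ℝⁿ × ℝᵐ → ℝⁿ be continuous with δ ≥ 0 componentwise, and define 𝕏₊(w) = Icc(f̂(w) − δ(w), f̂(w) + δ(w)). For 𝕎 ⊆ ℝⁿ × ℝᵐ define ℐ(𝕎) = { w ∈ 𝕎 : 𝕏₊(w) ⊆ proj(𝕎) } and ℐ^∞(𝕎) = ⋂_{i ≥ 1} ℐ^i(𝕎). Let 𝕎_N ⊆ ℝⁿ × ℝᵐ be any set. If 𝕎' ⊆ 𝕎_N is robust invariant, i.e. 𝕏₊(w) ⊆ proj(𝕎') for all w ∈ 𝕎', then 𝕎' ⊆ ℐ^∞(𝕎_N). In other words, ℐ^∞(𝕎_N) contains every robust invariant subset of 𝕎_N and hence is the maximal robust invariant subset of 𝕎_N. -/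
open Set Filter Topology

theorem stmt10 {n m : ℕ} (hn : 0 < n) (hm : 0 < m)
    (fhat del : (Fin n → ℝ) × (Fin m → ℝ) → Fin n → ℝ)
    (hfc : Continuous fhat) (hdc : Continuous del)
    (hd0 : ∀ w, (0 : Fin n → ℝ) ≤ del w)
    (WN W' : Set ((Fin n → ℝ) × (Fin m → ℝ)))
    (hsub : W' ⊆ WN)
    (hinv : ∀ w ∈ W', nextSet fhat del w ⊆ proj W') :
    W' ⊆ Iinf fhat del WN := by
  have key : ∀ k, W' ⊆ (Imap fhat del)^[k] WN := by
    intro k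
    induction k with
    | zero => simpa using hsub
    | succ k ih =>
      rw [Function.iterate_succ_apply']
      intro w hw
      exact ⟨ih hw, fun x hx => image_mono (f := Prod.fst) ih (hinv w hw hx)⟩
  exact fun w hw => mem_iInter.mpr fun i => key (i + 1) hw
end

section
/- Let n, m be positive integers, let f̂ : ℝⁿ × ℝᵐ → ℝⁿ and δ : ℝⁿ × ℝᵐ → ℝⁿ be continuous with δ ≥ 0 componentwise, define 𝕏₊(x,u) = Icc(f̂(x,u) − δ(x,u), f̂(x,u) + δ(x,u)), and let L : ℝⁿ → ℝ be continuous. Let 𝕎_cons ⊆ ℝⁿ × ℝᵐ be compact and let α > 0. Then the robust negative-definite set 𝕎_N(L) = { (x,u) ∈ 𝕎_cons : ∀ x₊ ∈ 𝕏₊(x,u), L(x₊) − L(x) ≤ −α } is compact. -/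
open Set Filter Topology

theorem stmt11 {n m : ℕ} (hn : 0 < n) (hm : 0 < m)
    (fhat del : (Fin n → ℝ) × (Fin m → ℝ) → Fin n → ℝ)
    (hfc : Continuous fhat) (hdc : Continuous del)
    (hd0 : ∀ w, (0 : Fin n → ℝ) ≤ del w)
    (L : (Fin n → ℝ) → ℝ) (hLc : Continuous L)
    (Wcons : Set ((Fin n → ℝ) × (Fin m → ℝ))) (hWcons : IsCompact Wcons)
    (α : ℝ) (hα : 0 < α) :
    IsCompact {w ∈ Wcons | ∀ xp ∈ nextSet fhat del w, L xp - L w.1 ≤ -α} := by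
  have hset : {w ∈ Wcons | ∀ xp ∈ nextSet fhat del w, L xp - L w.1 ≤ -α}
      = Wcons ∩ {w | ∀ t ∈ Set.Icc (-1 : Fin n → ℝ) 1,
          L (fhat w + t * del w) - L w.1 ≤ -α} := by
    ext w
    simp only [Set.mem_setOf_eq, Set.mem_sep_iff, Set.mem_inter_iff]
    refine and_congr_right fun _ => ⟨fun h t ht => ?_, fun h xp hxp => ?_⟩
    · refine h _ ⟨fun i => ?_, fun i => ?_⟩
      · simp only [Pi.sub_apply, Pi.add_apply, Pi.mul_apply]
        have : (-1 : ℝ) * del w i ≤ t i * del w i :=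
          mul_le_mul_of_nonneg_right (ht.1 i) (hd0 w i)
        nlinarith
      · simp only [Pi.add_apply, Pi.mul_apply]
        have : t i * del w i ≤ 1 * del w i :=
          mul_le_mul_of_nonneg_right (ht.2 i) (hd0 w i)
        nlinarith
    · set t : Fin n → ℝ := fun i =>
        if del w i = 0 then 0 else (xp i - fhat w i) / del w i with ht
      have hb : ∀ i, -1 ≤ t i ∧ t i ≤ 1 ∧ fhat w i + t i * del w i = xp i := by
        intro i
        have h1 := hxp.1 i
        have h2 := hxp.2 i
        simp only [Pi.sub_apply, Pi.add_apply] at h1 h2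
        by_cases hdi : del w i = 0
        · simp only [ht, hdi, if_pos]
          constructor
          · norm_num
          constructor
          · norm_num
          · rw [hdi] at h1 h2; nlinarith
        · have hdpos : 0 < del w i := lt_of_le_of_ne (hd0 w i) (Ne.symm hdi)
          simp only [ht, hdi, if_neg, if_false]
          refine ⟨?_, ?_, ?_⟩
          · rw [neg_le, ← neg_div]
            exact div_le_one_of_le₀ (by linarith) (by linarith)
          · exact div_le_one_of_le₀ (by linarith) (by linarith)
          · field_simp
            ring
      have := h t ⟨fun i => (hb i).1, fun i => (hb i).2.1⟩
      have heq : fhat w + t * del w = xp := funext fun i => (hb i).2.2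
      rwa [heq] at this
  rw [hset]
  refine hWcons.inter_right ?_
  have : {w : (Fin n → ℝ) × (Fin m → ℝ) | ∀ t ∈ Set.Icc (-1 : Fin n → ℝ) 1,
      L (fhat w + t * del w) - L w.1 ≤ -α}
      = ⋂ t ∈ Set.Icc (-1 : Fin n → ℝ) 1,
        {w | L (fhat w + t * del w) - L w.1 ≤ -α} := by
    ext w; simp
  rw [this]
  refine isClosed_biInter fun t _ => ?_
  exact isClosed_le (by fun_prop) continuous_const
end

section
/- Let n, m be positive integers, let f̂ : ℝⁿ × ℝᵐ → ℝⁿ and δ : ℝⁿ × ℝᵐ → ℝⁿ be continuous with δ ≥ 0 componentwise, and set f̲ = f̂ − δ and f̄ = f̂ + δ. Let w ∈ ℝⁿ × ℝᵐ and let (B_j)_{j ∈ ℕ} be a sequence of boxes in ℝⁿ × ℝᵐ with w ∈ B_j for all j and widths d(B_j) → 0, where d(B) is the maximum over coordinates of the side lengths of B. Suppose for each j there are vectors a₁(j), b₁(j), a₂(j), b₂(j) ∈ ℝⁿ such that f̲(w') ∈ Icc(a₁(j), b₁(j)) and f̄(w') ∈ Icc(a₂(j), b₂(j)) for all w' ∈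 B_j, and such that these inclusion boxes are convergent, i.e. d(Icc(a₁(j), b₁(j))) → 0 and d(Icc(a₂(j), b₂(j))) → 0 as j → ∞. Then the interval-union boxes [𝕏₊](B_j) = Icc(min(a₁(j), a₂(j)), max(b₁(j), b₂(j))) converge to 𝕏₊(w) = Icc(f̲(w), f̄(w)): the lower endpoints min(a₁(j), a₂(j)) converge to f̲(w), the upper endpoints max(b₁(j), b₂(j)) converge to f̄(w), and consequently d([𝕏₊](B_j)) converges to the maximum over coordinates i of (f̄_i(w) − f̲_i(w)) = 2 δ_i(w). -/
open Set Filter Topology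

/-- Width of a componentwise box `Icc a b` in `ℝⁿ`: the largest side length. -/
noncomputable def boxWidth {n : ℕ} (a b : Fin n → ℝ) : ℝ :=
  ⨆ i, (b i - a i)

/-- Width of a box `Icc l u` in the state-control space `ℝⁿ × ℝᵐ`:
the largest side length over all coordinates. -/
noncomputable def pboxWidth {n m : ℕ} (l u : (Fin n → ℝ) × (Fin m → ℝ)) : ℝ :=
  max (boxWidth l.1 u.1) (boxWidth l.2 u.2)

private lemma tendsto_finset_sup' {ι : Type*} {g : ℕ → ι → ℝ} {L : ι → ℝ}
    (h : ∀ i, Tendsto (fun j => g j i) atTop (𝓝 (L i)))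
    (s : Finset ι) (hs : s.Nonempty) :
    Tendsto (fun j => s.sup' hs (g j)) atTop (𝓝 (s.sup' hs L)) := by
  induction hs using Finset.Nonempty.cons_induction with
  | singleton i => simpa using h i
  | cons i s his hs2 ih =>
      simp only [Finset.sup'_cons hs2]
      exact (h i).max ih

private lemma tendsto_ciSup_fin {n : ℕ} (hn : 0 < n) {g : ℕ → Fin n → ℝ} {L : Fin n → ℝ}
    (h : ∀ i, Tendsto (fun j => g j i) atTop (𝓝 (L i))) :
    Tendsto (fun j => ⨆ i, g j i) atTop (𝓝 (⨆ i, L i)) := by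
  have : Nonempty (Fin n) := ⟨⟨0, hn⟩⟩
  have hu : (Finset.univ : Finset (Fin n)).Nonempty := Finset.univ_nonempty
  have e : ∀ f : Fin n → ℝ, Finset.univ.sup' hu f = ⨆ i, f i := by
    intro f
    exact Finset.sup'_univ_eq_ciSup f
  simp only [← e]
  exact tendsto_finset_sup' h _ hu

theorem stmt13 {n m : ℕ} (hn : 0 < n) (hm : 0 < m)
    (fhat del : (Fin n → ℝ) × (Fin m → ℝ) → Fin n → ℝ)
    (hfc : Continuous fhat) (hdc : Continuous del)
    (hd0 : ∀ w, (0 : Fin n → ℝ) ≤ del w)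
    (w : (Fin n → ℝ) × (Fin m → ℝ))
    (lo hi : ℕ → (Fin n → ℝ) × (Fin m → ℝ))
    (hw : ∀ j, w ∈ Set.Icc (lo j) (hi j))
    (hwidth : Tendsto (fun j => pboxWidth (lo j) (hi j)) atTop (𝓝 0))
    (a₁ b₁ a₂ b₂ : ℕ → Fin n → ℝ)
    (hincl₁ : ∀ j, ∀ w' ∈ Set.Icc (lo j) (hi j),
      fhat w' - del w' ∈ Set.Icc (a₁ j) (b₁ j))
    (hincl₂ : ∀ j, ∀ w' ∈ Set.Icc (lo j) (hi j),
      fhat w' + del w' ∈ Set.Icc (a₂ j) (b₂ j))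
    (hconv₁ : Tendsto (fun j => boxWidth (a₁ j) (b₁ j)) atTop (𝓝 0))
    (hconv₂ : Tendsto (fun j => boxWidth (a₂ j) (b₂ j)) atTop (𝓝 0)) :
    Tendsto (fun j => a₁ j ⊓ a₂ j) atTop (𝓝 (fhat w - del w)) ∧
      Tendsto (fun j => b₁ j ⊔ b₂ j) atTop (𝓝 (fhat w + del w)) ∧
      Tendsto (fun j => boxWidth (a₁ j ⊓ a₂ j) (b₁ j ⊔ b₂ j)) atTop
        (𝓝 (⨆ i, 2 * del w i)) := by
  have key : ∀ (a b : ℕ → Fin n → ℝ) (c : Fin n → ℝ),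
      (∀ j, c ∈ Set.Icc (a j) (b j)) →
      Tendsto (fun j => boxWidth (a j) (b j)) atTop (𝓝 0) →
      (∀ i, Tendsto (fun j => a j i) atTop (𝓝 (c i))) ∧
      (∀ i, Tendsto (fun j => b j i) atTop (𝓝 (c i))) := by
    intro a b c hc hwid
    have hsub : ∀ j i, b j i - a j i ≤ boxWidth (a j) (b j) := by
      intro j i
      exact le_ciSup (f := fun i => b j i - a j i)
        (Set.Finite.bddAbove (Set.finite_range _)) i
    have hab : ∀ j i, a j i ≤ c i := fun j i => (hc j).1 i
    have hbc : ∀ j i, c i ≤ b j i := fun j i => (hc j).2 i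
    constructor
    · intro i
      refine tendsto_of_tendsto_of_tendsto_of_le_of_le
        (g := fun j => c i - boxWidth (a j) (b j)) (h := fun _ => c i)
        (by simpa using tendsto_const_nhds.sub hwid) tendsto_const_nhds
        (fun j => ?_) (fun j => hab j i)
      have h1 := hsub j i
      have h2 := hbc j i
      simp only
      linarith
    · intro i
      refine tendsto_of_tendsto_of_tendsto_of_le_of_le
        (g := fun _ => c i) (h := fun j => c i + boxWidth (a j) (b j))
        tendsto_const_nhds (by simpa using tendsto_const_nhds.add hwid)
        (fun j => hbc j i) (fun j => ?_)
      have h1 := hsub j i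
      have h2 := hab j i
      simp only
      linarith
  obtain ⟨ha₁, hb₁⟩ := key a₁ b₁ (fhat w - del w) (fun j => hincl₁ j w (hw j)) hconv₁
  obtain ⟨ha₂, hb₂⟩ := key a₂ b₂ (fhat w + del w) (fun j => hincl₂ j w (hw j)) hconv₂
  have hle : ∀ i, fhat w i - del w i ≤ fhat w i + del w i := by
    intro i
    have : (0:ℝ) ≤ del w i := by simpa using hd0 w i
    linarith
  have hlow : Tendsto (fun j => a₁ j ⊓ a₂ j) atTop (𝓝 (fhat w - del w)) := by
    rw [tendsto_pi_nhds]
    intro i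
    simpa [min_eq_left (hle i)] using (ha₁ i).min (ha₂ i)
  have hhigh : Tendsto (fun j => b₁ j ⊔ b₂ j) atTop (𝓝 (fhat w + del w)) := by
    rw [tendsto_pi_nhds]
    intro i
    simpa [max_eq_right (hle i)] using (hb₁ i).max (hb₂ i)
  refine ⟨hlow, hhigh, ?_⟩
  unfold boxWidth
  have hcomp : ∀ i, Tendsto (fun j => (b₁ j ⊔ b₂ j) i - (a₁ j ⊓ a₂ j) i) atTop
      (𝓝 (2 * del w i)) := by
    intro i
    have h1 := (tendsto_pi_nhds.mp hhigh i).sub (tendsto_pi_nhds.mp hlow i)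
    have : (fhat w + del w) i - (fhat w - del w) i = 2 * del w i := by
      simp only [Pi.add_apply, Pi.sub_apply]; ring
    simpa [this, two_mul] using h1
  exact tendsto_ciSup_fin hn hcomp
end
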